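/- The subset Ω = {(x,y,z) ∈ ℝ³ : x² + y² + z² = 1, xyz < 0} of the unit sphere has exactly four connected components. -/

import Mathlib

open Set

local notation "E3" => EuclideanSpace ℝ (Fin 3)

private lemma e3_norm_sq (p : E3) : ‖p‖ ^ 2 = (p 0) ^ 2 + (p 1) ^ 2 + (p 2) ^ 2 := by
  rw [EuclideanSpace.norm_eq, Real.sq_sqrt (by positivity)]
  simp [Fin.sum_univ_three, Real.norm_eq_abs, sq_abs]

private lemma prod_neg_of_sign_eq {a b c a' b' c' : ℝ} (h : a * b * c < 0)
    (h0 : 0 < a * a') (h1 : 0 < b * b') (h2 : 0 < c * c') : a' * b' * c' < 0 := by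
  nlinarith [mul_pos (mul_pos h0 h1) h2]

private lemma last_sign {a b c a' b' c' : ℝ} (h : a * b * c < 0) (h' : a' * b' * c' < 0)
    (h0 : 0 < a * a') (h1 : 0 < b * b') : 0 < c * c' := by
  nlinarith [mul_pos h0 h1, mul_pos_of_neg_of_neg h h']

private lemma boolInd_iff {X : Type*} (s : Set X) (a b : X)
    (h : s.boolIndicator a = s.boolIndicator b) : a ∈ s ↔ b ∈ s := by
  by_cases ha : a ∈ s <;> by_cases hb : b ∈ s <;>
    simp_all [Set.mem_iff_boolIndicator, Set.notMem_iff_boolIndicator]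

private lemma conn_Asgn (s : Fin 3 → ℝ) (hs : ∀ i, s i ≠ 0) :
    IsConnected {p : E3 | (p 0) ^ 2 + (p 1) ^ 2 + (p 2) ^ 2 = 1 ∧
      0 < s 0 * p 0 ∧ 0 < s 1 * p 1 ∧ 0 < s 2 * p 2} := by
  set C : Set E3 := {p | 0 < s 0 * p 0 ∧ 0 < s 1 * p 1 ∧ 0 < s 2 * p 2} with hC
  have hconv : ∀ i : Fin 3, Convex ℝ {p : E3 | 0 < s i * p i} := by
    intro i
    exact convex_halfSpace_gt
      ⟨fun a b => by simp [mul_add], fun c a => by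
        simp [smul_eq_mul]; ring⟩ 0
  have hCconv : Convex ℝ C := by
    have : C = {p : E3 | 0 < s 0 * p 0} ∩ ({p : E3 | 0 < s 1 * p 1} ∩ {p : E3 | 0 < s 2 * p 2}) := by
      ext p; simp [hC, and_assoc]
    rw [this]
    exact (hconv 0).inter ((hconv 1).inter (hconv 2))
  have hCne : C.Nonempty := by
    refine ⟨(WithLp.equiv 2 (Fin 3 → ℝ)).symm s, ?_, ?_, ?_⟩ <;>
      simp [WithLp.equiv_symm_apply, PiLp.toLp_apply] <;> exact hs _
  have hCconn : IsConnected C := hCconv.isConnected hCne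
  have hcont : ContinuousOn (fun p : E3 => ‖p‖⁻¹ • p) C := by
    apply ContinuousOn.fun_smul _ continuous_id.continuousOn
    apply ContinuousOn.inv₀ continuous_norm.continuousOn
    intro p hp
    have : p ≠ 0 := by
      rintro rfl
      have h0 := hp.1
      simp at h0
    exact norm_ne_zero_iff.2 this
  have himg : (fun p : E3 => ‖p‖⁻¹ • p) '' C =
      {p : E3 | (p 0) ^ 2 + (p 1) ^ 2 + (p 2) ^ 2 = 1 ∧
        0 < s 0 * p 0 ∧ 0 < s 1 * p 1 ∧ 0 < s 2 * p 2} := by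
    ext p
    constructor
    · rintro ⟨q, ⟨hq0, hq1, hq2⟩, rfl⟩
      have hqne : q ≠ 0 := by
        intro h; rw [h] at hq0; simp at hq0
      have hn : 0 < ‖q‖ := norm_pos_iff.2 hqne
      have happ : ∀ i, (‖q‖⁻¹ • q) i = ‖q‖⁻¹ * q i := fun i => rfl
      have hnsq := e3_norm_sq q
      have hinv := inv_pos.2 hn
      refine ⟨?_, ?_, ?_, ?_⟩
      · simp only [happ]
        field_simp
        linarith [hnsq]
      · simp only [happ]; nlinarith
      · simp only [happ]; nlinarith
      · simp only [happ]; nlinarith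
    · rintro ⟨h1, h2, h3, h4⟩
      have hnorm : ‖p‖ = 1 := by nlinarith [e3_norm_sq p, norm_nonneg p]
      exact ⟨p, ⟨h2, h3, h4⟩, by show ‖p‖⁻¹ • p = p; rw [hnorm]; simp⟩
  rw [← himg]
  exact hCconn.image _ hcont

theorem statement15 :
    Nat.card (ConnectedComponents
      ↥{p : EuclideanSpace ℝ (Fin 3) |
        (p 0) ^ 2 + (p 1) ^ 2 + (p 2) ^ 2 = 1 ∧ p 0 * p 1 * p 2 < 0}) = 4 := by
  set Ω : Set E3 := {p : E3 |
      (p 0) ^ 2 + (p 1) ^ 2 + (p 2) ^ 2 = 1 ∧ p 0 * p 1 * p 2 < 0} with hΩ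
  -- coordinates are nonzero on Ω
  have hne : ∀ q : ↥Ω, ∀ i : Fin 3, q.1 i ≠ 0 := by
    rintro ⟨p, _, hprod⟩ i h
    have h0 : p 0 ≠ 0 := fun e => by rw [e] at hprod; simp at hprod
    have h1 : p 1 ≠ 0 := fun e => by rw [e] at hprod; simp at hprod
    have h2 : p 2 ≠ 0 := fun e => by rw [e] at hprod; simp at hprod
    fin_cases i
    exacts [h0 h, h1 h, h2 h]
  -- coordinate maps are continuous
  have hcoord : ∀ i : Fin 3, Continuous (fun q : ↥Ω => q.1 i) := fun i =>
    (EuclideanSpace.proj i).continuous.comp continuous_subtype_val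
  -- the sets {q | q i < 0} are clopen in Ω
  have hclopen : ∀ i : Fin 3, IsClopen {q : ↥Ω | q.1 i < 0} := by
    intro i
    constructor
    · have heq : {q : ↥Ω | q.1 i < 0} = {q : ↥Ω | 0 < q.1 i}ᶜ := by
        ext q
        simp only [mem_setOf_eq, mem_compl_iff, not_lt]
        exact ⟨le_of_lt, fun h => lt_of_le_of_ne h (hne q i)⟩
      rw [heq]
      exact (isOpen_lt continuous_const (hcoord i)).isClosed_compl
    · exact isOpen_lt (hcoord i) continuous_const
  -- the locally constant sign map
  set g : ↥Ω → Bool × Bool := fun q =>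
    ({q : ↥Ω | q.1 0 < 0}.boolIndicator q, {q : ↥Ω | q.1 1 < 0}.boolIndicator q) with hg
  have hgc : Continuous g :=
    Continuous.prodMk ((continuous_boolIndicator_iff_isClopen _).2 (hclopen 0))
      ((continuous_boolIndicator_iff_isClopen _).2 (hclopen 1))
  -- key: points with equal sign pattern lie in the same connected component
  have hkey : ∀ q r : ↥Ω, g q = g r → (q : ConnectedComponents ↥Ω) = r := by
    intro q r hgr
    have h0 : q.1 0 < 0 ↔ r.1 0 < 0 :=
      boolInd_iff {q : ↥Ω | q.1 0 < 0} q r (congrArg Prod.fst hgr)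
    have h1 : q.1 1 < 0 ↔ r.1 1 < 0 :=
      boolInd_iff {q : ↥Ω | q.1 1 < 0} q r (congrArg Prod.snd hgr)
    -- same-sign facts
    have hsame : ∀ i : Fin 3, (q.1 i < 0 ↔ r.1 i < 0) → 0 < q.1 i * r.1 i := by
      intro i hiff
      rcases lt_or_gt_of_ne (hne q i) with h | h
      · exact mul_pos_of_neg_of_neg h (hiff.1 h)
      · have : ¬ r.1 i < 0 := fun hr => absurd (hiff.2 hr) (not_lt.2 h.le)
        exact mul_pos h (lt_of_le_of_ne (not_lt.1 this) (Ne.symm (hne r i)))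
    have hqr0 : 0 < q.1 0 * r.1 0 := hsame 0 h0
    have hqr1 : 0 < q.1 1 * r.1 1 := hsame 1 h1
    have hqr2 : 0 < q.1 2 * r.1 2 := last_sign q.2.2 r.2.2 hqr0 hqr1
    -- the sign vector of q
    set s : Fin 3 → ℝ := fun i => if 0 < q.1 i then 1 else -1 with hsdef
    have hs : ∀ i, s i ≠ 0 := by
      intro i; by_cases h : 0 < q.1 i <;> simp [hsdef, h]
    have hsq : ∀ i, 0 < s i * q.1 i := by
      intro i
      by_cases h : 0 < q.1 i
      · simp [hsdef, h]
      · have hlt : q.1 i < 0 := lt_of_le_of_ne (not_lt.1 h) (hne q i)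
        simp [hsdef, h]
        linarith
    have hqrall : ∀ i : Fin 3, 0 < q.1 i * r.1 i := by
      intro i; fin_cases i; exacts [hqr0, hqr1, hqr2]
    have hsr : ∀ i, 0 < s i * r.1 i := by
      intro i
      have hqri := hqrall i
      by_cases h : 0 < q.1 i
      · have : 0 < r.1 i := by nlinarith
        simp [hsdef, h]
        linarith
      · have hlt : q.1 i < 0 := lt_of_le_of_ne (not_lt.1 h) (hne q i)
        have : r.1 i < 0 := by nlinarith
        simp [hsdef, h]
        linarith
    -- the connected sign set
    set A : Set E3 := {p : E3 | (p 0) ^ 2 + (p 1) ^ 2 + (p 2) ^ 2 = 1 ∧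
        0 < s 0 * p 0 ∧ 0 < s 1 * p 1 ∧ 0 < s 2 * p 2} with hA
    have hAconn : IsConnected A := conn_Asgn s hs
    have hAsub : A ⊆ Ω := by
      rintro p ⟨hp1, hp2, hp3, hp4⟩
      refine ⟨hp1, ?_⟩
      have csign : ∀ i : Fin 3, 0 < s i * p i → 0 < q.1 i * p i := by
        intro i hp
        have hsqi := hsq i
        by_cases h : 0 < q.1 i <;> simp [hsdef, h] at hp hsqi <;> nlinarith
      exact prod_neg_of_sign_eq q.2.2 (csign 0 hp2) (csign 1 hp3) (csign 2 hp4)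
    -- pull back to the subtype
    have hpre : IsPreconnected (Subtype.val ⁻¹' A : Set ↥Ω) := by
      rw [← Topology.IsInducing.subtypeVal.isPreconnected_image]
      have himg : Subtype.val '' (Subtype.val ⁻¹' A : Set ↥Ω) = A := by
        rw [Subtype.image_preimage_coe]
        exact inter_eq_right.2 hAsub
      rw [himg]
      exact hAconn.isPreconnected
    have hqA : q ∈ (Subtype.val ⁻¹' A : Set ↥Ω) := ⟨q.2.1, hsq 0, hsq 1, hsq 2⟩
    have hrA : r ∈ (Subtype.val ⁻¹' A : Set ↥Ω) := ⟨r.2.1, hsr 0, hsr 1, hsr 2⟩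
    rw [ConnectedComponents.coe_eq_coe']
    exact hpre.subset_connectedComponent hrA hqA
  -- lift to connected components
  let h : ConnectedComponents ↥Ω → Bool × Bool := hgc.connectedComponentsLift
  have hbij : Function.Bijective h := by
    constructor
    · intro c c' hcc
      obtain ⟨q, rfl⟩ := ConnectedComponents.surjective_coe c
      obtain ⟨r, rfl⟩ := ConnectedComponents.surjective_coe c'
      refine hkey q r ?_
      rw [← hgc.connectedComponentsLift_apply_coe q, ← hgc.connectedComponentsLift_apply_coe r]
      exact hcc
    · intro b
      -- construct a witness point for each sign pattern
      have ha : (0:ℝ) < (Real.sqrt 3)⁻¹ := by positivity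
      set a : ℝ := (Real.sqrt 3)⁻¹ with hadef
      have ha2 : a ^ 2 = 3⁻¹ := by
        rw [hadef, ← Real.sqrt_inv]
        exact Real.sq_sqrt (by norm_num)
      obtain ⟨b0, b1⟩ := b
      have mk : ∀ x y z : ℝ, x ^ 2 + y ^ 2 + z ^ 2 = 1 → x * y * z < 0 →
          ∃ q : ↥Ω, q.1 0 = x ∧ q.1 1 = y ∧ q.1 2 = z := by
        intro x y z hsph hprod
        refine ⟨⟨(WithLp.equiv 2 (Fin 3 → ℝ)).symm ![x, y, z], ?_, ?_⟩, ?_, ?_, ?_⟩ <;>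
          simp [WithLp.equiv_symm_apply, PiLp.toLp_apply, hsph, hprod]
      have key : ∀ x y z : ℝ, x ^ 2 + y ^ 2 + z ^ 2 = 1 → x * y * z < 0 →
          ∀ q : ↥Ω, q.1 0 = x → q.1 1 = y → h q = ({q : ↥Ω | q.1 0 < 0}.boolIndicator q,
            {q : ↥Ω | q.1 1 < 0}.boolIndicator q) := by
        intro _ _ _ _ _ q _ _
        exact hgc.connectedComponentsLift_apply_coe q
      cases b0 <;> cases b1
      · obtain ⟨q, hq0, hq1, hq2⟩ := mk a a (-a) (by nlinarith) (by nlinarith)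
        refine ⟨(q : ConnectedComponents ↥Ω), ?_⟩
        rw [show h (q : ConnectedComponents ↥Ω) = g q from hgc.connectedComponentsLift_apply_coe q, hg]
        simp only [Prod.mk.injEq]
        constructor <;> rw [← Set.notMem_iff_boolIndicator] <;> simp [hq0, hq1] <;> linarith
      · obtain ⟨q, hq0, hq1, hq2⟩ := mk a (-a) a (by nlinarith) (by nlinarith)
        refine ⟨(q : ConnectedComponents ↥Ω), ?_⟩
        rw [show h (q : ConnectedComponents ↥Ω) = g q from hgc.connectedComponentsLift_apply_coe q, hg]
        simp only [Prod.mk.injEq]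
        constructor
        · rw [← Set.notMem_iff_boolIndicator]; simp [hq0]; linarith
        · rw [← Set.mem_iff_boolIndicator]; simp [hq1]; linarith
      · obtain ⟨q, hq0, hq1, hq2⟩ := mk (-a) a a (by nlinarith) (by nlinarith)
        refine ⟨(q : ConnectedComponents ↥Ω), ?_⟩
        rw [show h (q : ConnectedComponents ↥Ω) = g q from hgc.connectedComponentsLift_apply_coe q, hg]
        simp only [Prod.mk.injEq]
        constructor
        · rw [← Set.mem_iff_boolIndicator]; simp [hq0]; linarith
        · rw [← Set.notMem_iff_boolIndicator]; simp [hq1]; linarith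
      · obtain ⟨q, hq0, hq1, hq2⟩ := mk (-a) (-a) (-a) (by nlinarith) (by nlinarith)
        refine ⟨(q : ConnectedComponents ↥Ω), ?_⟩
        rw [show h (q : ConnectedComponents ↥Ω) = g q from hgc.connectedComponentsLift_apply_coe q, hg]
        simp only [Prod.mk.injEq]
        constructor <;> rw [← Set.mem_iff_boolIndicator] <;> simp [hq0, hq1] <;> linarith
  rw [Nat.card_eq_of_bijective h hbij]
  simp [Nat.card_eq_fintype_card]
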